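/- arXiv:2011.13245 — 6 statements merged into one kernel-verified Lean document; each statement's English description precedes it below -/
import Mathlib

section
/- For a nonnegative integer m and a nonnegative integer k, the binomial coefficients C(m, 2^i) are even for all i = 0, 1, ..., k if and only if 2^(k+1) divides m. -/
lemma choose_pow_two_dvd_iff (i m : ℕ) :
    2 ∣ Nat.choose m (2 ^ i) ↔ 2 ∣ m / 2 ^ i := by
  induction i generalizing m with
  | zero => simp
  | succ i ih =>
    have : Fact (Nat.Prime 2) := ⟨Nat.prime_two⟩
    have h := @Choose.choose_modEq_choose_mod_mul_choose_div_nat m (2 ^ (i + 1)) 2 this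
    have h2 : (2 ^ (i + 1)) % 2 = 0 := by
      simp [Nat.pow_succ, Nat.mul_mod_left]
    have h3 : (2 ^ (i + 1)) / 2 = 2 ^ i := by
      rw [Nat.pow_succ, Nat.mul_div_cancel]; norm_num
    rw [h2, h3, Nat.choose_zero_right, one_mul] at h
    have : 2 ∣ Nat.choose m (2 ^ (i + 1)) ↔ 2 ∣ Nat.choose (m / 2) (2 ^ i) := by
      constructor <;> intro hd <;>
        [exact (Nat.modEq_zero_iff_dvd.mp ((Nat.modEq_zero_iff_dvd.mpr hd).symm.trans h).symm);
         exact Nat.modEq_zero_iff_dvd.mp (h.trans (Nat.modEq_zero_iff_dvd.mpr hd))]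
    rw [this, ih, Nat.div_div_eq_div_mul, ← pow_succ']

theorem binom_pow_two_even_iff (m k : ℕ) :
    (∀ i ≤ k, 2 ∣ Nat.choose m (2 ^ i)) ↔ 2 ^ (k + 1) ∣ m := by
  simp only [choose_pow_two_dvd_iff]
  constructor
  · intro h
    induction k with
    | zero => simpa using h 0 le_rfl
    | succ k ih =>
      have hk : 2 ^ (k + 1) ∣ m := ih fun i hi => h i (hi.trans (Nat.le_succ k))
      have h2 : 2 ∣ m / 2 ^ (k + 1) := h (k + 1) le_rfl
      rw [pow_succ]
      exact Nat.mul_dvd_of_dvd_div hk h2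
  · intro h i hi
    have hp : (2 : ℕ) ^ i ∣ m := dvd_trans (pow_dvd_pow 2 (hi.trans (Nat.le_succ k))) h
    rw [Nat.dvd_div_iff_mul_dvd hp, mul_comm, ← pow_succ']
    exact dvd_trans (pow_dvd_pow 2 (by omega)) h
end

section
/- Let m10, m01, m11 be nonnegative integers with 2^(r-2) dividing each of m10, m01, m11 (for some r ≥ 2). Consider the polynomial f(t1,t2) = (1+t1)^m10 · (1+t2)^m01 · (1+t1+t2)^m11 over the field F_2. Then for every i with 0 ≤ i ≤ 2^(r-1) and i not in {0, 2^(r-2), 2^(r-1)}, the coefficient of t1^i · t2^(2^(r-1)-i) in f is zero. -/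
open MvPolynomial

/-- Predicate: every exponent of variable 0 in the support of `g` is divisible by `q`. -/
def DivExp (q : ℕ) (g : MvPolynomial (Fin 2) (ZMod 2)) : Prop :=
  ∀ d ∈ g.support, q ∣ d 0

lemma divExp_one (q : ℕ) : DivExp q 1 := by
  intro d hd
  rw [show (1 : MvPolynomial (Fin 2) (ZMod 2)) = MvPolynomial.monomial 0 1 by simp] at hd
  have := MvPolynomial.support_monomial_subset hd
  simp only [Finset.mem_singleton] at this
  subst this
  simp

lemma divExp_add {q : ℕ} {g h : MvPolynomial (Fin 2) (ZMod 2)}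
    (hg : DivExp q g) (hh : DivExp q h) : DivExp q (g + h) := by
  intro d hd
  rcases Finset.mem_union.mp (MvPolynomial.support_add hd) with h' | h'
  · exact hg d h'
  · exact hh d h'

lemma divExp_mul {q : ℕ} {g h : MvPolynomial (Fin 2) (ZMod 2)}
    (hg : DivExp q g) (hh : DivExp q h) : DivExp q (g * h) := by
  intro d hd
  have := MvPolynomial.support_mul g h hd
  rcases Finset.mem_add.mp this with ⟨a, ha, b, hb, rfl⟩
  have : (a + b) 0 = a 0 + b 0 := rfl
  rw [this]
  exact dvd_add (hg a ha) (hh b hb)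

lemma divExp_pow {q : ℕ} {g : MvPolynomial (Fin 2) (ZMod 2)}
    (hg : DivExp q g) (n : ℕ) : DivExp q (g ^ n) := by
  induction n with
  | zero => simpa using divExp_one q
  | succ n ih => rw [pow_succ]; exact divExp_mul ih hg

lemma divExp_Xpow (q : ℕ) (j : Fin 2) : DivExp q ((MvPolynomial.X j : MvPolynomial (Fin 2) (ZMod 2)) ^ q) := by
  intro d hd
  rw [MvPolynomial.X_pow_eq_monomial] at hd
  have := MvPolynomial.support_monomial_subset hd
  simp only [Finset.mem_singleton] at this
  subst this
  fin_cases j <;> simp [Finsupp.single_apply]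

theorem coeff_vanish_off_special (m10 m01 m11 r : ℕ) (hr : 2 ≤ r)
    (h10 : 2 ^ (r - 2) ∣ m10) (h01 : 2 ^ (r - 2) ∣ m01) (h11 : 2 ^ (r - 2) ∣ m11)
    (f : MvPolynomial (Fin 2) (ZMod 2))
    (hf : f = (1 + MvPolynomial.X 0) ^ m10 * (1 + MvPolynomial.X 1) ^ m01 *
      (1 + MvPolynomial.X 0 + MvPolynomial.X 1) ^ m11)
    (i : ℕ) (hi : i ≤ 2 ^ (r - 1)) (hi0 : i ≠ 0) (hi1 : i ≠ 2 ^ (r - 2))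
    (hi2 : i ≠ 2 ^ (r - 1)) :
    MvPolynomial.coeff (Finsupp.single 0 i + Finsupp.single 1 (2 ^ (r - 1) - i)) f = 0 := by
  set q := 2 ^ (r - 2) with hq
  obtain ⟨a, rfl⟩ := h10
  obtain ⟨b, rfl⟩ := h01
  obtain ⟨c, rfl⟩ := h11
  have frob : ∀ g : MvPolynomial (Fin 2) (ZMod 2), (1 + g) ^ q = 1 + g ^ q := by
    intro g
    have h0 : (1 + g) ^ (2 ^ (r - 2)) = 1 ^ (2 ^ (r - 2)) + g ^ (2 ^ (r - 2)) :=
      add_pow_char_pow 1 g 2 (r - 2)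
    simpa using h0
  have hDiv : DivExp q f := by
    rw [hf]
    have h1 : DivExp q ((1 + MvPolynomial.X (0 : Fin 2)) ^ (q * a)) := by
      rw [pow_mul, frob]
      exact divExp_pow (divExp_add (divExp_one q) (divExp_Xpow q 0)) a
    have h2 : DivExp q ((1 + MvPolynomial.X (1 : Fin 2)) ^ (q * b)) := by
      rw [pow_mul, frob]
      exact divExp_pow (divExp_add (divExp_one q) (divExp_Xpow q 1)) b
    have h3 : DivExp q ((1 + MvPolynomial.X (0 : Fin 2) + MvPolynomial.X 1) ^ (q * c)) := by
      rw [pow_mul, add_assoc, frob]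
      have h4 : (MvPolynomial.X 0 + MvPolynomial.X 1 : MvPolynomial (Fin 2) (ZMod 2)) ^ (2 ^ (r - 2))
          = MvPolynomial.X 0 ^ (2 ^ (r - 2)) + MvPolynomial.X 1 ^ (2 ^ (r - 2)) :=
        add_pow_char_pow _ _ 2 (r - 2)
      rw [h4]
      exact divExp_pow (divExp_add (divExp_one q)
        (divExp_add (divExp_Xpow q 0) (divExp_Xpow q 1))) c
    exact divExp_mul (divExp_mul h1 h2) h3
  by_contra hne
  have hmem : (Finsupp.single (0 : Fin 2) i + Finsupp.single 1 (2 ^ (r - 1) - i)) ∈ f.support :=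
    MvPolynomial.mem_support_iff.mpr hne
  have hdvd := hDiv _ hmem
  have happ : ((Finsupp.single (0 : Fin 2) i + Finsupp.single 1 (2 ^ (r - 1) - i) : Fin 2 →₀ ℕ)) 0 = i := by
    simp [Finsupp.single_apply]
  rw [happ] at hdvd
  -- now q ∣ i, i ≤ 2^(r-1) = 2*q, i ∉ {0, q, 2q}: contradiction
  have h2q : 2 ^ (r - 1) = 2 * q := by
    rw [hq, ← pow_succ']
    congr 1
    omega
  obtain ⟨k, rfl⟩ := hdvd
  have hqpos : 0 < q := Nat.pow_pos (by norm_num)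
  rw [h2q] at hi hi2
  have hk : k ≤ 2 := Nat.le_of_mul_le_mul_left (by omega) hqpos
  interval_cases k <;> omega
end

section
/- Let m10, m01, m11 be nonnegative integers each divisible by 2^(r-2) (for some r ≥ 2), and let f(t1,t2) = (1+t1)^m10 · (1+t2)^m01 · (1+t1+t2)^m11 over F_2. Then the coefficient of t1^(2^(r-2)) · t2^(2^(r-2)) in f is congruent mod 2 to C(m10+m01, 2^(r-1)) + C(m10+m11, 2^(r-1)) + C(m01+m11, 2^(r-1)). -/
open MvPolynomial Finsupp

namespace CoeffMiddleAux

abbrev R2 := ZMod 2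

lemma coeff_mul_Xpow (p : MvPolynomial (Fin 2) R2) (i : Fin 2) (s : ℕ) (m : Fin 2 →₀ ℕ) :
    MvPolynomial.coeff m (p * X i ^ s) =
      if Finsupp.single i s ≤ m then MvPolynomial.coeff (m - Finsupp.single i s) p else 0 := by
  rw [X_pow_eq_monomial, coeff_mul_monomial']
  split_ifs <;> simp

lemma le01 (s : ℕ) (hs : 0 < s) :
    ¬ (single (0 : Fin 2) s ≤ (0 : Fin 2 →₀ ℕ)) ∧
    ¬ (single (1 : Fin 2) s ≤ (0 : Fin 2 →₀ ℕ)) ∧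
    ¬ (single (0 : Fin 2) s ≤ single (1 : Fin 2) s) ∧
    ¬ (single (1 : Fin 2) s ≤ single (0 : Fin 2) s) ∧
    (single (0 : Fin 2) s ≤ single (0 : Fin 2) s) ∧
    (single (1 : Fin 2) s ≤ single (1 : Fin 2) s) ∧
    (single (0 : Fin 2) s ≤ single (0 : Fin 2) s + single (1 : Fin 2) s) ∧
    (single (1 : Fin 2) s ≤ single (0 : Fin 2) s + single (1 : Fin 2) s) := by
  simp [Finsupp.single_le_iff, Finsupp.single_apply, hs, hs.le, hs.ne']


lemma sub01 (s : ℕ) :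
    (single (0 : Fin 2) s + single (1 : Fin 2) s) - single (0 : Fin 2) s = single (1 : Fin 2) s ∧
    (single (0 : Fin 2) s + single (1 : Fin 2) s) - single (1 : Fin 2) s = single (0 : Fin 2) s ∧
    single (0 : Fin 2) s - single (0 : Fin 2) s = (0 : Fin 2 →₀ ℕ) ∧
    single (1 : Fin 2) s - single (1 : Fin 2) s = (0 : Fin 2 →₀ ℕ) := by
  refine ⟨?_, ?_, ?_, ?_⟩
  · exact add_tsub_cancel_left _ _
  · exact add_tsub_cancel_right _ _
  · exact tsub_self _
  · exact tsub_self _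

lemma quad (s : ℕ) (hs : 0 < s) (A B C : ℕ) :
    (MvPolynomial.coeff (0 : Fin 2 →₀ ℕ)
        ((1 + X 0 ^ s) ^ A * (1 + X 1 ^ s) ^ B * (1 + X 0 ^ s + X 1 ^ s) ^ C :
          MvPolynomial (Fin 2) R2) = 1) ∧
    (MvPolynomial.coeff (single 0 s)
        ((1 + X 0 ^ s) ^ A * (1 + X 1 ^ s) ^ B * (1 + X 0 ^ s + X 1 ^ s) ^ C :
          MvPolynomial (Fin 2) R2) = (A : R2) + C) ∧
    (MvPolynomial.coeff (single 1 s)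
        ((1 + X 0 ^ s) ^ A * (1 + X 1 ^ s) ^ B * (1 + X 0 ^ s + X 1 ^ s) ^ C :
          MvPolynomial (Fin 2) R2) = (B : R2) + C) ∧
    (MvPolynomial.coeff (single 0 s + single 1 s)
        ((1 + X 0 ^ s) ^ A * (1 + X 1 ^ s) ^ B * (1 + X 0 ^ s + X 1 ^ s) ^ C :
          MvPolynomial (Fin 2) R2) = (A : R2) * B + (A : R2) * C + (B : R2) * C) := by
  have two : (2 : R2) = 0 := by decide
  obtain ⟨l1, l2, l3, l4, l5, l6, l7, l8⟩ := le01 s hs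
  obtain ⟨d1, d2, d3, d4⟩ := sub01 s
  have hz : single (0 : Fin 2) s + single (1 : Fin 2) s ≠ 0 := by
    intro h
    have := DFunLike.congr_fun h (0 : Fin 2)
    simp [Finsupp.single_apply] at this
    omega
  have hz0 : single (0 : Fin 2) s ≠ 0 := fun h => hs.ne' (Finsupp.single_eq_zero.mp h)
  have hz1 : single (1 : Fin 2) s ≠ 0 := fun h => hs.ne' (Finsupp.single_eq_zero.mp h)
  induction C with
  | succ C ihC =>
    obtain ⟨i1, i2, i3, i4⟩ := ihC
    have hg : ((1 + X 0 ^ s) ^ A * (1 + X 1 ^ s) ^ B * (1 + X 0 ^ s + X 1 ^ s) ^ (C + 1) :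
        MvPolynomial (Fin 2) R2) =
        ((1 + X 0 ^ s) ^ A * (1 + X 1 ^ s) ^ B * (1 + X 0 ^ s + X 1 ^ s) ^ C) * 1
        + ((1 + X 0 ^ s) ^ A * (1 + X 1 ^ s) ^ B * (1 + X 0 ^ s + X 1 ^ s) ^ C) * X 0 ^ s
        + ((1 + X 0 ^ s) ^ A * (1 + X 1 ^ s) ^ B * (1 + X 0 ^ s + X 1 ^ s) ^ C) * X 1 ^ s := by
      ring
    rw [hg]
    simp only [MvPolynomial.coeff_add, coeff_mul_Xpow, mul_one, l1, l2, l3, l4, l5, l6, l7, l8,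
      if_true, if_false, d1, d2, d3, d4, i1, i2, i3, i4, Nat.cast_succ]
    refine ⟨by simp, ?_, ?_, ?_⟩ <;> (push_cast; ring_nf; try simp [CharTwo.two_eq_zero]; try ring)
  | zero =>
    induction B with
    | succ B ihB =>
      obtain ⟨i1, i2, i3, i4⟩ := ihB
      have hg : ((1 + X 0 ^ s) ^ A * (1 + X 1 ^ s) ^ (B + 1) * (1 + X 0 ^ s + X 1 ^ s) ^ 0 :
          MvPolynomial (Fin 2) R2) =
          ((1 + X 0 ^ s) ^ A * (1 + X 1 ^ s) ^ B * (1 + X 0 ^ s + X 1 ^ s) ^ 0) * 1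
          + ((1 + X 0 ^ s) ^ A * (1 + X 1 ^ s) ^ B * (1 + X 0 ^ s + X 1 ^ s) ^ 0) * X 1 ^ s := by
        ring
      rw [hg]
      simp only [MvPolynomial.coeff_add, coeff_mul_Xpow, mul_one, l1, l2, l3, l4, l5, l6, l7, l8,
        if_true, if_false, d1, d2, d3, d4, i1, i2, i3, i4, Nat.cast_succ]
      refine ⟨by simp, ?_, ?_, ?_⟩ <;> (push_cast; ring_nf; try simp [CharTwo.two_eq_zero]; try ring)
    | zero =>
      induction A with
      | succ A ihA =>
        obtain ⟨i1, i2, i3, i4⟩ := ihA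
        have hg : ((1 + X 0 ^ s) ^ (A + 1) * (1 + X 1 ^ s) ^ 0 * (1 + X 0 ^ s + X 1 ^ s) ^ 0 :
            MvPolynomial (Fin 2) R2) =
            ((1 + X 0 ^ s) ^ A * (1 + X 1 ^ s) ^ 0 * (1 + X 0 ^ s + X 1 ^ s) ^ 0) * 1
            + ((1 + X 0 ^ s) ^ A * (1 + X 1 ^ s) ^ 0 * (1 + X 0 ^ s + X 1 ^ s) ^ 0) * X 0 ^ s := by
          ring
        rw [hg]
        simp only [MvPolynomial.coeff_add, coeff_mul_Xpow, mul_one, l1, l2, l3, l4, l5, l6, l7, l8,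
          if_true, if_false, d1, d2, d3, d4, i1, i2, i3, i4, Nat.cast_succ]
        refine ⟨by simp, ?_, ?_, ?_⟩ <;> (push_cast; ring_nf; try simp [CharTwo.two_eq_zero]; try ring)
      | zero =>
        simp [MvPolynomial.coeff_one]
        exact ⟨fun h => hz0 h.symm, fun h => hz1 h.symm, fun h => hz h.symm⟩

lemma choose_two_add (A B : ℕ) : (A + B).choose 2 = A.choose 2 + B.choose 2 + A * B := by
  induction B with
  | zero => simp
  | succ B ih =>
    have key : ∀ n : ℕ, (n + 1).choose 2 = n + n.choose 2 := by
      intro n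
      rw [show (2:ℕ) = 1 + 1 from rfl, Nat.choose_succ_succ, Nat.choose_one_right]
    have h : A + (B + 1) = (A + B) + 1 := by ring
    rw [h, key, key, ih, Nat.mul_succ]
    omega

lemma cast_choose_pow (k M : ℕ) :
    (((2 ^ k * M).choose (2 * 2 ^ k) : ZMod 2)) = (M.choose 2 : ZMod 2) := by
  have hp : 0 < 2 ^ k := Nat.pow_pos (n := k) (by norm_num)
  have h1 : (((1 : Polynomial (ZMod 2)) + Polynomial.X) ^ (2 ^ k * M)).coeff (2 * 2 ^ k) =
      ((2 ^ k * M).choose (2 * 2 ^ k) : ZMod 2) := Polynomial.coeff_one_add_X_pow _ _ _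
  have h2 : ((1 : Polynomial (ZMod 2)) + Polynomial.X) ^ (2 ^ k * M) =
      Polynomial.expand (ZMod 2) (2 ^ k) (((1 : Polynomial (ZMod 2)) + Polynomial.X) ^ M) := by
    rw [pow_mul, add_pow_char_pow, one_pow, map_pow, map_add, map_one, Polynomial.expand_X]
  rw [h2, Polynomial.coeff_expand_mul hp, Polynomial.coeff_one_add_X_pow] at h1
  exact h1.symm

end CoeffMiddleAux

theorem coeff_middle_term (m10 m01 m11 r : ℕ) (hr : 2 ≤ r)
    (h10 : 2 ^ (r - 2) ∣ m10) (h01 : 2 ^ (r - 2) ∣ m01) (h11 : 2 ^ (r - 2) ∣ m11)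
    (f : MvPolynomial (Fin 2) (ZMod 2))
    (hf : f = (1 + MvPolynomial.X 0) ^ m10 * (1 + MvPolynomial.X 1) ^ m01 *
      (1 + MvPolynomial.X 0 + MvPolynomial.X 1) ^ m11) :
    MvPolynomial.coeff (Finsupp.single 0 (2 ^ (r - 2)) + Finsupp.single 1 (2 ^ (r - 2))) f =
      ((Nat.choose (m10 + m01) (2 ^ (r - 1)) + Nat.choose (m10 + m11) (2 ^ (r - 1)) +
        Nat.choose (m01 + m11) (2 ^ (r - 1)) : ℕ) : ZMod 2) := by
  obtain ⟨A, hA⟩ := h10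
  obtain ⟨B, hB⟩ := h01
  obtain ⟨C, hC⟩ := h11
  set s : ℕ := 2 ^ (r - 2) with hs_def
  have hs : 0 < s := Nat.pow_pos (n := r - 2) (by norm_num)
  have e1 : ((1 : MvPolynomial (Fin 2) (ZMod 2)) + MvPolynomial.X 0) ^ s = 1 + MvPolynomial.X 0 ^ s := by
    rw [hs_def, add_pow_char_pow, one_pow]
  have e2 : ((1 : MvPolynomial (Fin 2) (ZMod 2)) + MvPolynomial.X 1) ^ s = 1 + MvPolynomial.X 1 ^ s := by
    rw [hs_def, add_pow_char_pow, one_pow]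
  have e3 : ((1 : MvPolynomial (Fin 2) (ZMod 2)) + MvPolynomial.X 0 + MvPolynomial.X 1) ^ s = 1 + MvPolynomial.X 0 ^ s + MvPolynomial.X 1 ^ s := by
    rw [hs_def, add_pow_char_pow, ← hs_def, e1]
  have hf2 : f = (1 + MvPolynomial.X 0 ^ s) ^ A * (1 + MvPolynomial.X 1 ^ s) ^ B * (1 + MvPolynomial.X 0 ^ s + MvPolynomial.X 1 ^ s) ^ C := by
    rw [hf, hA, hB, hC, pow_mul, pow_mul, pow_mul, e1, e2, e3]
  have hq := (CoeffMiddleAux.quad s hs A B C).2.2.2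
  rw [hf2, hq]
  -- now the binomial side
  have hr1 : 2 ^ (r - 1) = 2 * s := by
    rw [hs_def, ← pow_succ']
    congr 1
    omega
  have two : (2 : ZMod 2) = 0 := by decide
  have cAB : ((m10 + m01).choose (2 ^ (r - 1)) : ZMod 2) = ((A + B).choose 2 : ZMod 2) := by
    rw [hA, hB, ← Nat.mul_add, hr1]; exact CoeffMiddleAux.cast_choose_pow _ _
  have cAC : ((m10 + m11).choose (2 ^ (r - 1)) : ZMod 2) = ((A + C).choose 2 : ZMod 2) := by
    rw [hA, hC, ← Nat.mul_add, hr1]; exact CoeffMiddleAux.cast_choose_pow _ _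
  have cBC : ((m01 + m11).choose (2 ^ (r - 1)) : ZMod 2) = ((B + C).choose 2 : ZMod 2) := by
    rw [hB, hC, ← Nat.mul_add, hr1]; exact CoeffMiddleAux.cast_choose_pow _ _
  push_cast
  rw [cAB, cAC, cBC, CoeffMiddleAux.choose_two_add, CoeffMiddleAux.choose_two_add, CoeffMiddleAux.choose_two_add]
  push_cast
  ring_nf
  simp [CharTwo.two_eq_zero]
  try ring
end

section
/- Let a, b be nonnegative integers and r a positive integer with 2^(r-1) dividing both a and b. Then C(a, 2^(r-2))·C(b, 2^(r-2)) ≡ C(a+b, 2^(r-1)) mod 2 (for r ≥ 2). -/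
lemma choose_pow_two_mul_mod_two (k m n : ℕ) :
    Nat.choose (2 ^ k * m) (2 ^ k * n) % 2 = Nat.choose m n % 2 := by
  induction k with
  | zero => simp
  | succ k ih =>
    have : Fact (Nat.Prime 2) := ⟨Nat.prime_two⟩
    have h := (Choose.choose_modEq_choose_mod_mul_choose_div_nat
      (p := 2) (n := 2 ^ (k + 1) * m) (k := 2 ^ (k + 1) * n))
    have hm : 2 ^ (k + 1) * m % 2 = 0 := by
      simp [Nat.mul_mod, Nat.pow_mod]
    have hn : 2 ^ (k + 1) * n % 2 = 0 := by
      simp [Nat.mul_mod, Nat.pow_mod]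
    have hdm : 2 ^ (k + 1) * m / 2 = 2 ^ k * m := by
      rw [pow_succ, mul_comm (2 ^ k) 2, mul_assoc, Nat.mul_div_cancel_left _ (by norm_num)]
    have hdn : 2 ^ (k + 1) * n / 2 = 2 ^ k * n := by
      rw [pow_succ, mul_comm (2 ^ k) 2, mul_assoc, Nat.mul_div_cancel_left _ (by norm_num)]
    rw [hm, hn, hdm, hdn] at h
    simpa [Nat.ModEq, ih] using h

lemma vandermonde_two (a b : ℕ) :
    Nat.choose (a + b) 2 = Nat.choose a 2 + Nat.choose b 2 + a * b := by
  rw [Nat.add_choose_eq]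
  rw [show Finset.HasAntidiagonal.antidiagonal 2 = {(0, 2), (1, 1), (2, 0)} from rfl]
  rw [Finset.sum_insert (by decide), Finset.sum_insert (by decide), Finset.sum_singleton]
  simp [Nat.choose_one_right]
  ring

theorem vandermonde_pow_two_mod_two (a b r : ℕ) (hr : 2 ≤ r)
    (ha : 2 ^ (r - 2) ∣ a) (hb : 2 ^ (r - 2) ∣ b) :
    Nat.choose (a + b) (2 ^ (r - 1)) % 2 =
      (Nat.choose a (2 ^ (r - 1)) + Nat.choose b (2 ^ (r - 1)) +
        Nat.choose a (2 ^ (r - 2)) * Nat.choose b (2 ^ (r - 2))) % 2 := by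
  set k := r - 2 with hk
  have hr1 : r - 1 = k + 1 := by omega
  obtain ⟨a', rfl⟩ := ha
  obtain ⟨b', rfl⟩ := hb
  have h1 : 2 ^ (r - 1) = 2 ^ k * 2 := by rw [hr1, pow_succ]
  have hab : 2 ^ k * a' + 2 ^ k * b' = 2 ^ k * (a' + b') := by ring
  have e1 := choose_pow_two_mul_mod_two k (a' + b') 2
  have e2 := choose_pow_two_mul_mod_two k a' 2
  have e3 := choose_pow_two_mul_mod_two k b' 2
  have e4 := choose_pow_two_mul_mod_two k a' 1
  have e5 := choose_pow_two_mul_mod_two k b' 1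
  rw [hab, h1, e1, Nat.add_mod, Nat.add_mod (Nat.choose _ _), e2, e3, Nat.mul_mod,
    mul_one] at *
  rw [e4, e5, vandermonde_two]
  simp [Nat.choose_one_right, Nat.add_mod, Nat.mul_mod]
end

section
/- Let G = GL_2(F_q) with q odd, and let B be the Borel subgroup of upper triangular matrices. The transfer (verlagerung) map ver_{G/B}: G/[G,G] → B/[B,B] sends the class of g to the class of the scalar matrix diag(det g, det g). -/
open Matrix
open scoped commutatorElement

set_option linter.unusedSectionVars false
set_option synthInstance.maxHeartbeats 1000000
set_option maxHeartbeats 1000000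

namespace TransferGL2

variable {F : Type*} [Field F] [Fintype F] [DecidableEq F]

def lowU (c : F) : GL (Fin 2) F :=
  ⟨!![1,0;c,1], !![1,0;-c,1],
   by simp [Matrix.mul_fin_two, Matrix.one_fin_two],
   by simp [Matrix.mul_fin_two, Matrix.one_fin_two]⟩

def wU : GL (Fin 2) F :=
  ⟨!![0,1;1,0], !![0,1;1,0],
   by simp [Matrix.mul_fin_two, Matrix.one_fin_two],
   by simp [Matrix.mul_fin_two, Matrix.one_fin_two]⟩

def upU (c : F) : GL (Fin 2) F :=
  ⟨!![1,c;0,1], !![1,-c;0,1],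
   by simp [Matrix.mul_fin_two, Matrix.one_fin_two],
   by simp [Matrix.mul_fin_two, Matrix.one_fin_two]⟩

def dU (a d : Fˣ) : GL (Fin 2) F :=
  ⟨!![(a:F),0;0,(d:F)], !![((a⁻¹:Fˣ):F),0;0,((d⁻¹:Fˣ):F)],
   by simp [Matrix.mul_fin_two, Matrix.one_fin_two],
   by simp [Matrix.mul_fin_two, Matrix.one_fin_two]⟩

lemma val_mul (u v : GL (Fin 2) F) :
    ((u * v : GL (Fin 2) F) : Matrix (Fin 2) (Fin 2) F) = u * v := rfl

lemma gl_ext {u v : GL (Fin 2) F}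
    (h : (u : Matrix (Fin 2) (Fin 2) F) = v) : u = v := Units.ext h

lemma dU_mul (a d a' d' : Fˣ) : (dU a d : GL (Fin 2) F) * dU a' d' = dU (a*a') (d*d') := by
  apply gl_ext
  rw [val_mul]
  show (!![(a:F),0;0,(d:F)]) * !![(a':F),0;0,(d':F)] = _
  rw [Matrix.mul_fin_two]
  show _ = !![((a:F)*a'),0;0,((d:F)*d')]
  congr 1 <;> ring

def f0 : Option F → GL (Fin 2) F
  | none => wU
  | some c => lowU c

lemma transfer_section {G : Type*} [Group G] {H : Subgroup G} [H.FiniteIndex]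
    {A : Type*} [CommGroup A] (ϕ : H →* A) (f : G ⧸ H → G)
    (hf : ∀ q : G ⧸ H, (f q : G ⧸ H) = q) (g : G)
    (mem : ∀ q : G ⧸ H, (f q)⁻¹ * g * f (g⁻¹ • q) ∈ H) :
    letI := H.fintypeQuotientOfFiniteIndex
    ϕ.transfer g = ∏ q : G ⧸ H, ϕ ⟨(f q)⁻¹ * g * f (g⁻¹ • q), mem q⟩ := by
  letI := H.fintypeQuotientOfFiniteIndex
  rw [MonoidHom.transfer_def ϕ ⟨Set.range f, Subgroup.isComplement_range_left hf⟩ g]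
  unfold Subgroup.leftTransversals.diff
  refine Finset.prod_congr rfl fun q _ => ?_
  congr 1
  apply Subtype.ext
  simp only [Subgroup.coe_mk]
  rw [Subgroup.smul_apply_eq_smul_apply_inv_smul,
      Subgroup.IsComplement.leftQuotientEquiv_apply, Subgroup.IsComplement.leftQuotientEquiv_apply,
      smul_eq_mul, mul_assoc]
  all_goals exact hf

variable (B : Subgroup (GL (Fin 2) F))

lemma exists_f0
    (hB : ∀ g : GL (Fin 2) F, g ∈ B ↔ (g : Matrix (Fin 2) (Fin 2) F) 1 0 = 0)
    (g : GL (Fin 2) F) : ∃ x : Option F, (f0 x)⁻¹ * g ∈ B := by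
  by_cases h : ((g : Matrix (Fin 2) (Fin 2) F)) 0 0 = 0
  · refine ⟨none, (hB _).mpr ?_⟩
    rw [val_mul]
    show ((!![0,1;1,0] : Matrix (Fin 2) (Fin 2) F) * (g : Matrix (Fin 2) (Fin 2) F)) 1 0 = 0
    rw [Matrix.mul_apply, Fin.sum_univ_two]
    simpa using h
  · refine ⟨some (((g : Matrix (Fin 2) (Fin 2) F) 1 0) / ((g : Matrix (Fin 2) (Fin 2) F) 0 0)),
      (hB _).mpr ?_⟩
    rw [val_mul]
    show ((!![1,0;-(((g : Matrix (Fin 2) (Fin 2) F) 1 0) / ((g : Matrix (Fin 2) (Fin 2) F) 0 0)),1] : Matrix (Fin 2) (Fin 2) F)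
        * (g : Matrix (Fin 2) (Fin 2) F)) 1 0 = 0
    rw [Matrix.mul_apply, Fin.sum_univ_two]
    simp only [Matrix.cons_val', Matrix.cons_val_zero, Matrix.cons_val_one, Matrix.head_cons,
      Matrix.empty_val', Matrix.cons_val_fin_one, Matrix.head_fin_const, Matrix.of_apply]
    field_simp
    ring


lemma entry10 (x y : GL (Fin 2) F) :
    ((x * y : GL (Fin 2) F) : Matrix (Fin 2) (Fin 2) F) 1 0 =
      (x : Matrix (Fin 2) (Fin 2) F) 1 0 * (y : Matrix (Fin 2) (Fin 2) F) 0 0 +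
      (x : Matrix (Fin 2) (Fin 2) F) 1 1 * (y : Matrix (Fin 2) (Fin 2) F) 1 0 := by
  rw [val_mul, Matrix.mul_apply, Fin.sum_univ_two]

lemma f0_inj
    (hB : ∀ g : GL (Fin 2) F, g ∈ B ↔ (g : Matrix (Fin 2) (Fin 2) F) 1 0 = 0)
    {x y : Option F} (h : (f0 x)⁻¹ * f0 y ∈ B) : x = y := by
  rw [hB, entry10] at h
  match x, y with
  | none, none => rfl
  | none, some c =>
    exfalso
    revert h
    show ¬((!![0,1;1,0] : Matrix (Fin 2) (Fin 2) F) 1 0 * (!![1,0;c,1] : Matrix (Fin 2) (Fin 2) F) 0 0 +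
      (!![0,1;1,0] : Matrix (Fin 2) (Fin 2) F) 1 1 * (!![1,0;c,1] : Matrix (Fin 2) (Fin 2) F) 1 0 = 0)
    simp
  | some c, none =>
    exfalso
    revert h
    show ¬((!![1,0;-c,1] : Matrix (Fin 2) (Fin 2) F) 1 0 * (!![0,1;1,0] : Matrix (Fin 2) (Fin 2) F) 0 0 +
      (!![1,0;-c,1] : Matrix (Fin 2) (Fin 2) F) 1 1 * (!![0,1;1,0] : Matrix (Fin 2) (Fin 2) F) 1 0 = 0)
    simp
  | some c, some c' =>
    congr 1
    have h' : (!![1,0;-c,1] : Matrix (Fin 2) (Fin 2) F) 1 0 * (!![1,0;c',1] : Matrix (Fin 2) (Fin 2) F) 0 0 +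
      (!![1,0;-c,1] : Matrix (Fin 2) (Fin 2) F) 1 1 * (!![1,0;c',1] : Matrix (Fin 2) (Fin 2) F) 1 0 = 0 := h
    simp at h'
    linear_combination -h'

noncomputable def eQuot
    (hB : ∀ g : GL (Fin 2) F, g ∈ B ↔ (g : Matrix (Fin 2) (Fin 2) F) 1 0 = 0) :
    Option F ≃ (GL (Fin 2) F) ⧸ B :=
  Equiv.ofBijective (fun x => ((f0 x : GL (Fin 2) F) : (GL (Fin 2) F) ⧸ B))
    ⟨fun x y hxy => f0_inj B hB (QuotientGroup.eq.mp hxy),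
     fun q => QuotientGroup.induction_on q fun g => by
       obtain ⟨x, hx⟩ := exists_f0 B hB g
       exact ⟨x, (QuotientGroup.eq.mpr hx)⟩⟩

def τ (a d : Fˣ) : Option F → Option F := Option.map (fun c => (a:F) * ((d:F))⁻¹ * c)

def bval (a d : Fˣ) : Option F → GL (Fin 2) F
  | none => dU d a
  | some _ => dU a d

lemma dU_mem
    (hB : ∀ g : GL (Fin 2) F, g ∈ B ↔ (g : Matrix (Fin 2) (Fin 2) F) 1 0 = 0)
    (a d : Fˣ) : (dU a d : GL (Fin 2) F) ∈ B := by
  rw [hB]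
  show (!![(a:F),0;0,(d:F)] : Matrix (Fin 2) (Fin 2) F) 1 0 = 0
  simp

lemma bval_mem
    (hB : ∀ g : GL (Fin 2) F, g ∈ B ↔ (g : Matrix (Fin 2) (Fin 2) F) 1 0 = 0)
    (a d : Fˣ) (x : Option F) : bval a d x ∈ B := by
  cases x <;> exact dU_mem B hB _ _

lemma key_diag (a d : Fˣ) (x : Option F) :
    (dU a d : GL (Fin 2) F) * f0 (τ a d x) = f0 x * bval a d x := by
  cases x with
  | none =>
    apply gl_ext
    rw [val_mul, val_mul]
    show (!![(a:F),0;0,(d:F)]) * !![0,1;1,0] = !![0,1;1,0] * !![(d:F),0;0,(a:F)]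
    rw [Matrix.mul_fin_two, Matrix.mul_fin_two]
    norm_num
  | some c =>
    apply gl_ext
    rw [val_mul, val_mul]
    show (!![(a:F),0;0,(d:F)]) * !![1,0;(a:F) * ((d:F))⁻¹ * c,1]
        = !![1,0;c,1] * !![(a:F),0;0,(d:F)]
    rw [Matrix.mul_fin_two, Matrix.mul_fin_two]
    have hd : (d:F) ≠ 0 := Units.ne_zero d
    congr 1 <;> simp [hd] <;> field_simp <;> ring

lemma term_eq (a d : Fˣ) (x : Option F) :
    (f0 x)⁻¹ * (dU a d : GL (Fin 2) F) * f0 (τ a d x) = bval a d x := by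
  rw [mul_assoc, key_diag, inv_mul_cancel_left]


lemma diag_fin_two (a d : F) : Matrix.diagonal ![a,d] = !![a,0;0,d] := by
  ext i j
  fin_cases i <;> fin_cases j <;> simp [Matrix.diagonal]

lemma pow_fin_two_diag (a d : F) (n : ℕ) :
    (!![a,0;0,d] : Matrix (Fin 2) (Fin 2) F) ^ n = !![a^n,0;0,d^n] := by
  rw [← diag_fin_two, Matrix.diagonal_pow, ← diag_fin_two]
  have h : (![a,d] : Fin 2 → F)^n = ![a^n,d^n] := by
    funext i; fin_cases i <;> simp [Pi.pow_apply]
  rw [h]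

lemma transfer_dU [B.FiniteIndex]
    (hB : ∀ g : GL (Fin 2) F, g ∈ B ↔ (g : Matrix (Fin 2) (Fin 2) F) 1 0 = 0)
    (a d : Fˣ) :
    MonoidHom.transfer (Abelianization.of (G := B)) (dU a d)
      = Abelianization.of ⟨dU (a*d) (a*d), dU_mem B hB _ _⟩ := by
  classical
  letI := B.fintypeQuotientOfFiniteIndex
  set e := eQuot B hB with he
  set f : (GL (Fin 2) F) ⧸ B → GL (Fin 2) F := fun q => f0 (e.symm q) with hfdef
  have hf : ∀ q, ((f q : GL (Fin 2) F) : (GL (Fin 2) F) ⧸ B) = q := fun q =>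
    e.apply_symm_apply q
  have hsmul : ∀ x : Option F, (dU a d : GL (Fin 2) F)⁻¹ • (e x) = e (τ a d x) := by
    intro x
    show (dU a d : GL (Fin 2) F)⁻¹ • ((f0 x : GL (Fin 2) F) : (GL (Fin 2) F) ⧸ B)
        = ((f0 (τ a d x) : GL (Fin 2) F) : (GL (Fin 2) F) ⧸ B)
    rw [MulAction.Quotient.smul_mk]
    apply (QuotientGroup.eq).mpr
    have hgrp : ((dU a d : GL (Fin 2) F)⁻¹ • f0 x)⁻¹ * f0 (τ a d x)
        = (f0 x)⁻¹ * (dU a d : GL (Fin 2) F) * f0 (τ a d x) := by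
      rw [smul_eq_mul]; group
    rw [hgrp, term_eq]
    exact bval_mem B hB a d x
  have hfe : ∀ x, f (e x) = f0 x := fun x => by rw [hfdef]; simp only [e.symm_apply_apply]
  have mem : ∀ q, (f q)⁻¹ * (dU a d : GL (Fin 2) F) * f ((dU a d : GL (Fin 2) F)⁻¹ • q) ∈ B := by
    intro q
    obtain ⟨x, rfl⟩ := e.surjective q
    rw [hsmul, hfe, hfe, term_eq]
    exact bval_mem B hB a d x
  rw [transfer_section (Abelianization.of (G := B)) f hf _ mem]
  rw [← Equiv.prod_comp e]
  have factor : ∀ x : Option F,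
      ∀ h : (f (e x))⁻¹ * (dU a d : GL (Fin 2) F) * f ((dU a d : GL (Fin 2) F)⁻¹ • e x) ∈ B,
      (⟨(f (e x))⁻¹ * (dU a d : GL (Fin 2) F) * f ((dU a d : GL (Fin 2) F)⁻¹ • e x), h⟩ : B)
        = ⟨bval a d x, bval_mem B hB a d x⟩ := by
    intro x h
    apply Subtype.ext
    show (f (e x))⁻¹ * (dU a d : GL (Fin 2) F) * f ((dU a d : GL (Fin 2) F)⁻¹ • e x) = bval a d x
    rw [hsmul, hfe, hfe, term_eq]
  refine (Finset.prod_congr rfl fun x _ => congrArg Abelianization.of (factor x _)).trans ?_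
  rw [Fintype.prod_option]
  show (Abelianization.of (⟨dU d a, bval_mem B hB a d none⟩ : B)) *
      ∏ _c : F, Abelianization.of (⟨dU a d, dU_mem B hB a d⟩ : B)
      = Abelianization.of ⟨dU (a*d) (a*d), dU_mem B hB _ _⟩
  rw [Finset.prod_const, Finset.card_univ, ← map_pow, ← _root_.map_mul]
  congr 1
  apply Subtype.ext
  rw [Subgroup.coe_mul, SubgroupClass.coe_pow]
  apply gl_ext
  rw [val_mul]
  show (!![(d:F),0;0,(a:F)]) * (((dU a d : GL (Fin 2) F) ^ Fintype.card F : GL (Fin 2) F) : Matrix (Fin 2) (Fin 2) F)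
      = !![((a*d : Fˣ):F),0;0,((a*d : Fˣ):F)]
  rw [Units.val_pow_eq_pow_val]
  show (!![(d:F),0;0,(a:F)]) * (!![(a:F),0;0,(d:F)]) ^ Fintype.card F = _
  rw [pow_fin_two_diag, Matrix.mul_fin_two]
  rw [FiniteField.pow_card, FiniteField.pow_card]
  norm_num [mul_comm]


noncomputable def dUB
    (hB : ∀ g : GL (Fin 2) F, g ∈ B ↔ (g : Matrix (Fin 2) (Fin 2) F) 1 0 = 0)
    (u : Fˣ) : B := ⟨dU u u, dU_mem B hB u u⟩

lemma dUB_one (hB : ∀ g : GL (Fin 2) F, g ∈ B ↔ (g : Matrix (Fin 2) (Fin 2) F) 1 0 = 0) :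
    dUB B hB 1 = 1 := by
  apply Subtype.ext
  apply gl_ext
  show (!![((1:Fˣ):F),0;0,((1:Fˣ):F)] : Matrix (Fin 2) (Fin 2) F) = 1
  simp [Matrix.one_fin_two]

lemma dUB_mul (hB : ∀ g : GL (Fin 2) F, g ∈ B ↔ (g : Matrix (Fin 2) (Fin 2) F) 1 0 = 0)
    (u v : Fˣ) : dUB B hB (u * v) = dUB B hB u * dUB B hB v := by
  apply Subtype.ext
  rw [Subgroup.coe_mul]
  exact (dU_mul u u v v).symm

/-- the candidate homomorphism `g ↦ diag(det g, det g)` into the abelianization of `B`. -/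
noncomputable def Ψ
    (hB : ∀ g : GL (Fin 2) F, g ∈ B ↔ (g : Matrix (Fin 2) (Fin 2) F) 1 0 = 0) :
    GL (Fin 2) F →* Abelianization B :=
  (Abelianization.of).comp
    (({ toFun := dUB B hB, map_one' := dUB_one B hB,
        map_mul' := dUB_mul B hB } : Fˣ →* B).comp
      (Matrix.GeneralLinearGroup.det))

lemma Ψ_apply (hB : ∀ g : GL (Fin 2) F, g ∈ B ↔ (g : Matrix (Fin 2) (Fin 2) F) 1 0 = 0)
    (g : GL (Fin 2) F) :
    Ψ B hB g = Abelianization.of (dUB B hB (Matrix.GeneralLinearGroup.det g)) := rfl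

lemma comm_map_one {A : Type*} [CommGroup A] (φ : GL (Fin 2) F →* A) (x y : GL (Fin 2) F) :
    φ ⁅x, y⁆ = 1 := by
  rw [map_commutatorElement]
  exact commutatorElement_eq_one_iff_mul_comm.mpr (mul_comm _ _)

lemma exists_unit_ne_one (hodd : Odd (Fintype.card F)) : ∃ u : Fˣ, ((u:F)) ≠ 1 := by
  have h2 : 1 < Fintype.card F := Fintype.one_lt_card
  have h3 : 3 ≤ Fintype.card F := by
    rcases hodd with ⟨k, hk⟩
    omega
  have hcard : ({0, 1} : Finset F).card < Fintype.card F :=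
    lt_of_le_of_lt (Finset.card_insert_le _ _) (by simp; omega)
  have hne : (({0, 1} : Finset F)ᶜ).Nonempty := by
    rw [← Finset.card_pos, Finset.card_compl]
    omega
  obtain ⟨u, hu⟩ := hne
  simp only [Finset.mem_compl, Finset.mem_insert, Finset.mem_singleton, not_or] at hu
  exact ⟨Units.mk0 u hu.1, hu.2⟩

lemma upU_commutator (u : Fˣ) (b : F) :
    ⁅(dU u 1 : GL (Fin 2) F), upU b⁆ = upU (((u:F) - 1) * b) := by
  rw [commutatorElement_def]
  apply gl_ext
  show (!![(u:F),0;0,((1:Fˣ):F)] * !![1,b;0,1]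
        * !![((u⁻¹:Fˣ):F),0;0,((1⁻¹:Fˣ):F)] * !![1,-b;0,1] : Matrix (Fin 2) (Fin 2) F)
      = !![1,((u:F) - 1) * b;0,1]
  rw [Matrix.mul_fin_two, Matrix.mul_fin_two, Matrix.mul_fin_two]
  ext i j
  fin_cases i <;> fin_cases j <;> simp [Units.mul_inv] <;> ring

lemma lowU_commutator (u : Fˣ) (b : F) :
    ⁅(dU 1 u : GL (Fin 2) F), lowU b⁆ = lowU (((u:F) - 1) * b) := by
  rw [commutatorElement_def]
  apply gl_ext
  show (!![((1:Fˣ):F),0;0,(u:F)] * !![1,0;b,1]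
        * !![((1⁻¹:Fˣ):F),0;0,((u⁻¹:Fˣ):F)] * !![1,0;-b,1] : Matrix (Fin 2) (Fin 2) F)
      = !![1,0;((u:F) - 1) * b,1]
  rw [Matrix.mul_fin_two, Matrix.mul_fin_two, Matrix.mul_fin_two]
  ext i j
  fin_cases i <;> fin_cases j <;> simp [Units.mul_inv] <;> ring

/-- unit corresponding to a transvection -/
def TuU (t : Matrix.TransvectionStruct (Fin 2) F) : GL (Fin 2) F :=
  ⟨t.toMatrix, t.inv.toMatrix, t.mul_inv, t.inv_mul⟩

lemma transvection_cases (t : Matrix.TransvectionStruct (Fin 2) F) :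
    (∃ c : F, t.toMatrix = !![1,c;0,1]) ∨ (∃ c : F, t.toMatrix = !![1,0;c,1]) := by
  obtain ⟨i, j, hij, c⟩ := t
  have hm : (Matrix.TransvectionStruct.mk i j hij c).toMatrix = Matrix.transvection i j c := rfl
  fin_cases i <;> fin_cases j
  · exact absurd rfl hij
  · refine Or.inl ⟨c, ?_⟩
    rw [hm]
    ext i j
    fin_cases i <;> fin_cases j <;>
      simp [Matrix.transvection, Matrix.single, Matrix.one_apply]
  · refine Or.inr ⟨c, ?_⟩
    rw [hm]
    ext i j
    fin_cases i <;> fin_cases j <;>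
      simp [Matrix.transvection, Matrix.single, Matrix.one_apply]
  · exact absurd rfl hij

lemma map_TuU_eq_one (hodd : Odd (Fintype.card F)) {A : Type*} [CommGroup A]
    (φ : GL (Fin 2) F →* A) (t : Matrix.TransvectionStruct (Fin 2) F) : φ (TuU t) = 1 := by
  obtain ⟨u, hu⟩ := exists_unit_ne_one (F := F) hodd
  have hu' : (u:F) - 1 ≠ 0 := sub_ne_zero.mpr hu
  rcases transvection_cases t with ⟨c, hc⟩ | ⟨c, hc⟩
  · have h1 : TuU t = upU c := gl_ext hc
    have h2 : (upU c : GL (Fin 2) F) = ⁅(dU u 1 : GL (Fin 2) F), upU (c / ((u:F) - 1))⁆ := by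
      rw [upU_commutator u (c / ((u:F) - 1))]
      congr 1
      field_simp
    rw [h1, h2, comm_map_one]
  · have h1 : TuU t = lowU c := gl_ext hc
    have h2 : (lowU c : GL (Fin 2) F) = ⁅(dU 1 u : GL (Fin 2) F), lowU (c / ((u:F) - 1))⁆ := by
      rw [lowU_commutator u (c / ((u:F) - 1))]
      congr 1
      field_simp
    rw [h1, h2, comm_map_one]

lemma map_list_TuU_eq_one (hodd : Odd (Fintype.card F)) {A : Type*} [CommGroup A]
    (φ : GL (Fin 2) F →* A) (L : List (Matrix.TransvectionStruct (Fin 2) F)) :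
    φ ((L.map TuU).prod) = 1 := by
  rw [map_list_prod, List.map_map]
  apply List.prod_eq_one
  intro x hx
  simp only [List.mem_map, Function.comp] at hx
  obtain ⟨t, _, rfl⟩ := hx
  exact map_TuU_eq_one hodd φ t


lemma main [B.FiniteIndex]
    (hB : ∀ g : GL (Fin 2) F, g ∈ B ↔ (g : Matrix (Fin 2) (Fin 2) F) 1 0 = 0)
    (hodd : Odd (Fintype.card F)) (g : GL (Fin 2) F) :
    MonoidHom.transfer (Abelianization.of (G := B)) g = Ψ B hB g := by
  obtain ⟨L, L', D, hM⟩ := Matrix.Pivot.exists_list_transvec_mul_diagonal_mul_list_transvec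
      ((g : Matrix (Fin 2) (Fin 2) F))
  have hdetg : (g : Matrix (Fin 2) (Fin 2) F).det ≠ 0 :=
    ((Matrix.isUnit_iff_isUnit_det _).mp (Units.isUnit g)).ne_zero
  have hD : Matrix.det (Matrix.diagonal D) ≠ 0 := by
    intro hzero
    rw [hM, Matrix.det_mul, Matrix.det_mul, hzero] at hdetg
    simp at hdetg
  rw [Matrix.det_diagonal, Fin.prod_univ_two] at hD
  have h0 : D 0 ≠ 0 := fun h => hD (by rw [h, zero_mul])
  have h1 : D 1 ≠ 0 := fun h => hD (by rw [h, mul_zero])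
  set uD : GL (Fin 2) F := dU (Units.mk0 (D 0) h0) (Units.mk0 (D 1) h1) with huD
  have hDval : (uD : Matrix (Fin 2) (Fin 2) F) = Matrix.diagonal D := by
    show (!![D 0,0;0,D 1] : Matrix (Fin 2) (Fin 2) F) = Matrix.diagonal D
    ext i j
    fin_cases i <;> fin_cases j <;> simp [Matrix.diagonal_apply]
  have hcoe : ∀ M : List (Matrix.TransvectionStruct (Fin 2) F),
      (((M.map TuU).prod : GL (Fin 2) F) : Matrix (Fin 2) (Fin 2) F)
        = (M.map Matrix.TransvectionStruct.toMatrix).prod := by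
    intro M
    have := map_list_prod (Units.coeHom (Matrix (Fin 2) (Fin 2) F)) (M.map TuU)
    rw [List.map_map] at this
    exact this
  have hgu : g = (L.map TuU).prod * uD * (L'.map TuU).prod := by
    apply gl_ext
    rw [val_mul, val_mul, hcoe, hcoe, hDval]
    exact hM
  rw [hgu, _root_.map_mul, _root_.map_mul, _root_.map_mul, _root_.map_mul,
    map_list_TuU_eq_one hodd _ L, map_list_TuU_eq_one hodd _ L',
    map_list_TuU_eq_one hodd (Ψ B hB) L, map_list_TuU_eq_one hodd (Ψ B hB) L',
    one_mul, mul_one, one_mul, mul_one]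
  rw [transfer_dU B hB, Ψ_apply]
  have hdet : Matrix.GeneralLinearGroup.det uD = Units.mk0 (D 0) h0 * Units.mk0 (D 1) h1 := by
    apply Units.ext
    show ((Matrix.GeneralLinearGroup.det uD : Fˣ) : F) = D 0 * D 1
    rw [Matrix.GeneralLinearGroup.val_det_apply, hDval, Matrix.det_diagonal,
      Fin.prod_univ_two]
  rw [hdet]
  rfl

end TransferGL2

theorem transfer_GL2_to_Borel (F : Type*) [Field F] [Fintype F] [DecidableEq F]
    (hodd : Odd (Fintype.card F))
    (B : Subgroup (GL (Fin 2) F)) [B.FiniteIndex]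
    (hB : ∀ g : GL (Fin 2) F, g ∈ B ↔ (g : Matrix (Fin 2) (Fin 2) F) 1 0 = 0)
    (g : GL (Fin 2) F) (z : B)
    (hz : ((z : GL (Fin 2) F) : Matrix (Fin 2) (Fin 2) F) =
      Matrix.scalar (Fin 2) ((Matrix.GeneralLinearGroup.det g : Fˣ) : F)) :
    MonoidHom.transfer (Abelianization.of (G := B)) g = Abelianization.of z := by
  rw [TransferGL2.main B hB hodd g, TransferGL2.Ψ_apply]
  congr 1
  apply Subtype.ext
  apply TransferGL2.gl_ext
  show (!![((Matrix.GeneralLinearGroup.det g : Fˣ) : F),0;0,((Matrix.GeneralLinearGroup.det g : Fˣ) : F)] : Matrix (Fin 2) (Fin 2) F)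
    = ((z : GL (Fin 2) F) : Matrix (Fin 2) (Fin 2) F)
  rw [hz, Matrix.scalar_apply]
  ext i j
  fin_cases i <;> fin_cases j <;> simp [Matrix.diagonal]
end

section
/- Let G = GL_2(F_q) with q odd and B the subgroup of upper triangular matrices. Then the determinant of the permutation representation ℂ[G/B] (equivalently, det of Ind_B^G of the trivial representation) is the character sgn_G: g ↦ sign character given by the Legendre symbol of det(g), i.e., the unique linear character of G of order 2. -/
open scoped Classical
set_option linter.unusedSectionVars false
set_option synthInstance.maxHeartbeats 1000000
set_option maxHeartbeats 1000000

section Aux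
variable {F : Type*} [Field F] [Fintype F] [DecidableEq F]

lemma vec2_mul (a b c d : F) : (fun i => ![a,b] i * ![c,d] i) = ![a*c, b*d] := by
  funext i; fin_cases i <;> simp

lemma diag2_mul (a b c d : F) : Matrix.diagonal ![a,b] * Matrix.diagonal ![c,d]
    = Matrix.diagonal ![a*c, b*d] := by
  rw [Matrix.diagonal_mul_diagonal, vec2_mul]

lemma diag2_one : (Matrix.diagonal ![(1:F),1]) = 1 := by
  have h : ![(1:F),1] = fun _ => 1 := by funext i; fin_cases i <;> simp
  rw [h]; exact Matrix.diagonal_one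

-- diagonal unit hom
def dHom : Fˣ →* GL (Fin 2) F where
  toFun a := ⟨Matrix.diagonal ![(a:F), 1], Matrix.diagonal ![((a⁻¹ :Fˣ):F), 1], by
      rw [diag2_mul]; simp [diag2_one], by rw [diag2_mul]; simp [diag2_one]⟩
  map_one' := by ext : 1; simp [diag2_one]
  map_mul' a b := by
    ext : 1
    show Matrix.diagonal _ = Matrix.diagonal _ * Matrix.diagonal _
    rw [diag2_mul]
    norm_num

end Aux

section Aux2
variable {F : Type*} [Field F] [Fintype F] [DecidableEq F]

-- scalar unit hom
def sHom : Fˣ →* GL (Fin 2) F where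
  toFun s := ⟨(s:F) • 1, ((s⁻¹:Fˣ):F) • 1, by simp [smul_smul], by simp [smul_smul]⟩
  map_one' := by ext : 1; simp
  map_mul' a b := by ext : 1; show ((a*b : Fˣ):F) • (1:Matrix (Fin 2) (Fin 2) F) = _;
                     simp [smul_smul, mul_comm]

lemma sHom_central (s : Fˣ) (z : GL (Fin 2) F) : z * sHom s = sHom s * z := by
  ext : 1
  show (z : Matrix (Fin 2) (Fin 2) F) * ((s:F) • 1) = ((s:F) • 1) * z
  rw [mul_smul_comm, smul_mul_assoc, mul_one, one_mul]

lemma toPerm_sHom (B : Subgroup (GL (Fin 2) F))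
    (hB : ∀ g : GL (Fin 2) F, g ∈ B ↔ (g : Matrix (Fin 2) (Fin 2) F) 1 0 = 0) (s : Fˣ) :
    MulAction.toPermHom (GL (Fin 2) F) (GL (Fin 2) F ⧸ B) (sHom s) = 1 := by
  ext x
  induction x using QuotientGroup.induction_on with
  | H z =>
    show (sHom s) • (z : (GL (Fin 2) F) ⧸ B) = z
    rw [MulAction.Quotient.smul_mk]
    refine QuotientGroup.eq.2 ?_
    have : (sHom s • z)⁻¹ * z = (sHom s⁻¹ : GL (Fin 2) F) := by
      show (sHom s * z)⁻¹ * z = _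
      rw [mul_inv_rev, mul_assoc, ← map_inv]
      rw [← sHom_central s⁻¹ z, ← mul_assoc, inv_mul_cancel, one_mul]
    rw [this, hB]
    show (((s⁻¹:Fˣ):F) • (1:Matrix (Fin 2) (Fin 2) F)) 1 0 = 0
    simp [Matrix.one_apply]

-- transvection units
lemma transvection_pow {i j : Fin 2} (hij : i ≠ j) (c : F) (n : ℕ) :
    (Matrix.transvection i j c)^n = Matrix.transvection i j (n • c) := by
  induction n with
  | zero => simp [Matrix.transvection_zero]
  | succ n ih =>
      rw [pow_succ, ih, Matrix.transvection_mul_transvection_same i j hij, succ_nsmul]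

def tU (t : Matrix.TransvectionStruct (Fin 2) F) : GL (Fin 2) F :=
  ⟨t.toMatrix, t.inv.toMatrix, t.mul_inv, t.inv_mul⟩

lemma tU_pow_card (t : Matrix.TransvectionStruct (Fin 2) F) :
    (tU t) ^ (Fintype.card F) = 1 := by
  ext : 1
  show t.toMatrix ^ (Fintype.card F) = 1
  rw [Matrix.TransvectionStruct.toMatrix, transvection_pow t.hij, nsmul_eq_mul,
    FiniteField.cast_card_eq_zero, zero_mul, Matrix.transvection_zero]

lemma int_units_eq_one {x : ℤˣ} {n : ℕ} (h : x ^ n = 1) (hn : Odd n) : x = 1 := by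
  rcases Int.units_eq_one_or x with rfl | rfl
  · rfl
  · rw [hn.neg_one_pow] at h; exact absurd h (by decide)

end Aux2

section Aux3
variable {F : Type*} [Field F] [Fintype F] [DecidableEq F]

noncomputable def fcol (M : GL (Fin 2) F) : Option F :=
  if (M : Matrix (Fin 2) (Fin 2) F) 0 0 = 0 then none
  else some ((M : Matrix (Fin 2) (Fin 2) F) 1 0 / (M : Matrix (Fin 2) (Fin 2) F) 0 0)

lemma det_ne (M : GL (Fin 2) F) : Matrix.det (M : Matrix (Fin 2) (Fin 2) F) ≠ 0 :=
  ((Matrix.isUnit_iff_isUnit_det _).1 ⟨M, rfl⟩).ne_zero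

lemma col_ne (M : GL (Fin 2) F) (h : (M : Matrix (Fin 2) (Fin 2) F) 0 0 = 0) :
    (M : Matrix (Fin 2) (Fin 2) F) 1 0 ≠ 0 := by
  intro h10
  apply det_ne M
  rw [Matrix.det_fin_two, h, h10, zero_mul, mul_zero, sub_zero]

lemma fcol_eq_iff (M N : GL (Fin 2) F) : fcol M = fcol N ↔
    (M : Matrix (Fin 2) (Fin 2) F) 0 0 * (N : Matrix (Fin 2) (Fin 2) F) 1 0 =
    (M : Matrix (Fin 2) (Fin 2) F) 1 0 * (N : Matrix (Fin 2) (Fin 2) F) 0 0 := by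
  unfold fcol
  by_cases hM : (M : Matrix (Fin 2) (Fin 2) F) 0 0 = 0 <;>
    by_cases hN : (N : Matrix (Fin 2) (Fin 2) F) 0 0 = 0 <;>
    simp [hM, hN]
  · exact col_ne M hM
  · exact col_ne N hN
  · rw [div_eq_div_iff (by exact hM) (by exact hN)]
    constructor <;> intro h <;> linear_combination -h

lemma inB_iff (B : Subgroup (GL (Fin 2) F))
    (hB : ∀ g : GL (Fin 2) F, g ∈ B ↔ (g : Matrix (Fin 2) (Fin 2) F) 1 0 = 0)
    (M N : GL (Fin 2) F) : M⁻¹ * N ∈ B ↔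
    (M : Matrix (Fin 2) (Fin 2) F) 0 0 * (N : Matrix (Fin 2) (Fin 2) F) 1 0 =
    (M : Matrix (Fin 2) (Fin 2) F) 1 0 * (N : Matrix (Fin 2) (Fin 2) F) 0 0 := by
  rw [hB]
  have hd := det_ne M
  have key : ((M⁻¹ * N : GL (Fin 2) F) : Matrix (Fin 2) (Fin 2) F) 1 0 =
      (Matrix.det (M : Matrix (Fin 2) (Fin 2) F))⁻¹ *
      ((M : Matrix (Fin 2) (Fin 2) F) 0 0 * (N : Matrix (Fin 2) (Fin 2) F) 1 0 -
       (M : Matrix (Fin 2) (Fin 2) F) 1 0 * (N : Matrix (Fin 2) (Fin 2) F) 0 0) := by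
    rw [Units.val_mul, Matrix.coe_units_inv, Matrix.inv_def, Matrix.adjugate_fin_two,
      Matrix.mul_apply, Fin.sum_univ_two]
    simp only [Matrix.smul_apply, Matrix.of_apply, Matrix.cons_val', Matrix.cons_val_zero,
      Matrix.cons_val_one, Matrix.head_cons, Matrix.head_fin_const, smul_eq_mul, Ring.inverse_eq_inv']
    ring
  rw [key, mul_eq_zero, sub_eq_zero]
  simp [inv_eq_zero, hd]

end Aux3

section Aux4
variable {F : Type*} [Field F] [Fintype F] [DecidableEq F]
variable (B : Subgroup (GL (Fin 2) F))
    (hB : ∀ g : GL (Fin 2) F, g ∈ B ↔ (g : Matrix (Fin 2) (Fin 2) F) 1 0 = 0)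

noncomputable def fq : GL (Fin 2) F ⧸ B → Option F :=
  Quotient.lift fcol (fun M N h => by
    rw [fcol_eq_iff]
    exact (inB_iff B hB M N).1 (QuotientGroup.leftRel_apply.1 h))

lemma fq_mk (M : GL (Fin 2) F) : fq B hB (QuotientGroup.mk M) = fcol M := rfl

lemma fq_bij : Function.Bijective (fq B hB) := by
  constructor
  · intro x y
    induction x using QuotientGroup.induction_on with
    | H M =>
      induction y using QuotientGroup.induction_on with
      | H N =>
        intro h
        rw [fq_mk, fq_mk, fcol_eq_iff] at h
        exact Quotient.sound (QuotientGroup.leftRel_apply.2 ((inB_iff B hB M N).2 h))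
  · intro o
    match o with
    | none =>
        have hw : (!![0,1;1,0] : Matrix (Fin 2) (Fin 2) F) * !![0,1;1,0] = 1 := by
          ext i j; fin_cases i <;> fin_cases j <;>
            simp [Matrix.mul_apply, Fin.sum_univ_two, Matrix.one_apply]
        refine ⟨QuotientGroup.mk ⟨!![0,1;1,0], !![0,1;1,0], hw, hw⟩, ?_⟩
        rw [fq_mk]
        unfold fcol
        norm_num
    | some x =>
        have h1 : (!![1,0;x,1] : Matrix (Fin 2) (Fin 2) F) * !![1,0;-x,1] = 1 := by
          ext i j; fin_cases i <;> fin_cases j <;>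
            simp [Matrix.mul_apply, Fin.sum_univ_two, Matrix.one_apply]
        have h2 : (!![1,0;-x,1] : Matrix (Fin 2) (Fin 2) F) * !![1,0;x,1] = 1 := by
          ext i j; fin_cases i <;> fin_cases j <;>
            simp [Matrix.mul_apply, Fin.sum_univ_two, Matrix.one_apply]
        refine ⟨QuotientGroup.mk ⟨!![1,0;x,1], !![1,0;-x,1], h1, h2⟩, ?_⟩
        rw [fq_mk]
        unfold fcol
        norm_num

noncomputable def eQ : (GL (Fin 2) F ⧸ B) ≃ Option F := Equiv.ofBijective _ (fq_bij B hB)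

lemma dHom_val (c : Fˣ) : ((dHom c : GL (Fin 2) F) : Matrix (Fin 2) (Fin 2) F)
    = Matrix.diagonal ![(c:F), 1] := rfl

lemma fq_smul (c : Fˣ) (x : GL (Fin 2) F ⧸ B) :
    fq B hB (dHom c • x) = Option.map (· * ((c:F))⁻¹) (fq B hB x) := by
  induction x using QuotientGroup.induction_on with
  | H M =>
    rw [MulAction.Quotient.smul_mk, fq_mk, fq_mk]
    show fcol (dHom c * M) = _
    have e0 : ((dHom c * M : GL (Fin 2) F) : Matrix (Fin 2) (Fin 2) F) 0 0
        = (c:F) * (M : Matrix (Fin 2) (Fin 2) F) 0 0 := by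
      rw [Units.val_mul, dHom_val, Matrix.diagonal_mul]; norm_num
    have e1 : ((dHom c * M : GL (Fin 2) F) : Matrix (Fin 2) (Fin 2) F) 1 0
        = (M : Matrix (Fin 2) (Fin 2) F) 1 0 := by
      rw [Units.val_mul, dHom_val, Matrix.diagonal_mul]; norm_num
    unfold fcol
    rw [e0, e1]
    by_cases hM : (M : Matrix (Fin 2) (Fin 2) F) 0 0 = 0
    · simp [hM]
    · rw [if_neg (by simp [hM, c.ne_zero]), if_neg hM]
      simp only [Option.map_some]
      rw [mul_comm ((c:F)), ← div_div, div_eq_mul_inv]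

end Aux4

section Aux5
variable {F : Type*} [Field F] [Fintype F] [DecidableEq F]

lemma sign_mulRight (hodd : Odd (Fintype.card F)) (γ : Fˣ)
    (hγ : ∀ x : Fˣ, x ∈ Subgroup.zpowers γ) :
    Equiv.Perm.sign (Equiv.mulRight₀ ((γ:F))⁻¹ (inv_ne_zero γ.ne_zero)) = -1 := by
  set π := Equiv.mulRight₀ ((γ:F))⁻¹ (inv_ne_zero γ.ne_zero) with hπ
  have happ : ∀ x : F, π x = x * ((γ:F))⁻¹ := fun x => rfl
  have hγ1 : ((γ:F)) ≠ 1 := by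
    intro h
    have hγ1 : γ = 1 := Units.ext h
    have : ∀ x : Fˣ, x = 1 := by
      intro x
      obtain ⟨k, hk⟩ := (Subgroup.mem_zpowers_iff).1 (hγ x)
      rw [← hk, hγ1, one_zpow]
    have h2 : Fintype.card Fˣ = 1 := Fintype.card_eq_one_iff.2 ⟨1, fun x => this x⟩
    rw [Fintype.card_units] at h2
    have h3 : (2:ℕ) ≤ Fintype.card F := Fintype.one_lt_card
    have : Fintype.card F = 2 := by omega
    rw [this] at hodd
    exact (by decide : ¬ Odd 2) hodd
  have hinv1 : ((γ:F))⁻¹ ≠ 1 := by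
    intro h
    exact hγ1 (by rw [← inv_inv ((γ:F)), h, inv_one])
  have hfix : ∀ x : F, π x = x ↔ x = 0 := by
    intro x
    rw [happ]
    constructor
    · intro h
      by_contra hx
      exact hinv1 (mul_left_cancel₀ hx (by rw [h, mul_one]))
    · rintro rfl; rw [zero_mul]
  have hpow : ∀ (n : ℕ) (x : F), (π^n) x = x * (((γ:F))⁻¹)^n := by
    intro n
    induction n with
    | zero => intro x; simp
    | succ n ih =>
        intro x
        rw [pow_succ', Equiv.Perm.mul_apply, happ, ih, pow_succ']
        ring
  have hcycle : π.IsCycle := by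
    refine ⟨1, by simp only [ne_eq, hfix]; exact one_ne_zero, ?_⟩
    intro y hy
    have hy0 : y ≠ 0 := fun h => hy (by rw [h, hfix])
    obtain ⟨k, hk⟩ := mem_powers_iff_mem_zpowers.2
      ((Subgroup.zpowers_inv (g := γ)).symm ▸ hγ (Units.mk0 y hy0))
    refine ⟨(k:ℤ), ?_⟩
    rw [zpow_natCast, hpow, one_mul]
    have := congrArg (Units.val) hk
    push_cast at this
    exact this
  have hsupp : π.support = ({0} : Finset F)ᶜ := by
    ext x
    rw [Equiv.Perm.mem_support, Finset.mem_compl, Finset.mem_singleton]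
    exact not_congr (hfix x)
  have hcard : π.support.card = Fintype.card F - 1 := by
    rw [hsupp, Finset.card_compl, Finset.card_singleton]
  rw [hcycle.sign, hcard, (Nat.Odd.sub_odd hodd odd_one).neg_one_pow]

end Aux5

section Aux6
variable {F : Type*} [Field F] [Fintype F] [DecidableEq F]
variable (B : Subgroup (GL (Fin 2) F))
    (hB : ∀ g : GL (Fin 2) F, g ∈ B ↔ (g : Matrix (Fin 2) (Fin 2) F) 1 0 = 0)
    [Fintype (GL (Fin 2) F ⧸ B)] [DecidableEq (GL (Fin 2) F ⧸ B)]

lemma toPerm_dHom_eq (c : Fˣ) :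
    MulAction.toPermHom (GL (Fin 2) F) (GL (Fin 2) F ⧸ B) (dHom c)
      = (eQ B hB).symm.permCongr (Equiv.optionCongr
          (Equiv.mulRight₀ ((c:F))⁻¹ (inv_ne_zero c.ne_zero))) := by
  ext x
  apply (eQ B hB).injective
  rw [Equiv.permCongr_apply, Equiv.symm_symm, Equiv.apply_symm_apply]
  show fq B hB (dHom c • x) = _
  rw [fq_smul B hB]
  show _ = Option.map _ (fq B hB x)
  congr 1

include hB in
lemma sign_dHom_gen (hodd : Odd (Fintype.card F)) (γ : Fˣ)
    (hγ : ∀ x : Fˣ, x ∈ Subgroup.zpowers γ) :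
    Equiv.Perm.sign (MulAction.toPermHom (GL (Fin 2) F) (GL (Fin 2) F ⧸ B) (dHom γ)) = -1 := by
  rw [toPerm_dHom_eq B hB γ, Equiv.Perm.sign_permCongr, Equiv.optionCongr_sign,
    sign_mulRight hodd γ hγ]

lemma isSquare_gen_pow (hodd : Odd (Fintype.card F)) (γ : Fˣ)
    (hγ : ∀ x : Fˣ, x ∈ Subgroup.zpowers γ) (k : ℕ) :
    IsSquare (γ ^ k) ↔ Even k := by
  have horder : orderOf γ = Nat.card Fˣ := orderOf_eq_card_of_forall_mem_zpowers hγ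
  have heven : Even (Nat.card Fˣ) := by
    rw [Nat.card_eq_fintype_card, Fintype.card_units]; exact Nat.Odd.sub_odd hodd odd_one
  constructor
  · rintro ⟨b, hb⟩
    obtain ⟨j, hj⟩ := mem_powers_iff_mem_zpowers.2 (hγ b)
    have h2j : γ ^ k = γ ^ (2*j) := by
      rw [hb, ← hj, ← pow_add, two_mul]
    rw [pow_eq_pow_iff_modEq] at h2j
    have h2 : (2:ℕ) ∣ orderOf γ := by rw [horder]; exact heven.two_dvd
    have hmod := Nat.ModEq.of_dvd h2 h2j
    have : k % 2 = 0 := by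
      have := hmod
      unfold Nat.ModEq at this
      omega
    exact Nat.even_iff.2 this
  · rintro ⟨m, rfl⟩
    exact ⟨γ ^ m, by rw [← pow_add]⟩

lemma isSquare_mul_sq_iff {G : Type*} [CommGroup G] (x y : G) :
    IsSquare (x * y^2) ↔ IsSquare x := by
  constructor
  · rintro ⟨b, hb⟩
    refine ⟨b * y⁻¹, ?_⟩
    calc x = x * y^2 * (y⁻¹ * y⁻¹) := by group
    _ = (b * b) * (y⁻¹ * y⁻¹) := by rw [hb]
    _ = (b * y⁻¹) * (b * y⁻¹) := mul_mul_mul_comm b b y⁻¹ y⁻¹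
  · rintro ⟨b, hb⟩
    refine ⟨b * y, ?_⟩
    calc x * y^2 = (b * b) * (y * y) := by rw [hb, pow_two]
    _ = (b * y) * (b * y) := mul_mul_mul_comm b b y y

end Aux6

section Aux7
variable {F : Type*} [Field F] [Fintype F] [DecidableEq F]

lemma tU_prod_val (L : List (Matrix.TransvectionStruct (Fin 2) F)) :
    (((L.map tU).prod : GL (Fin 2) F) : Matrix (Fin 2) (Fin 2) F)
      = (L.map Matrix.TransvectionStruct.toMatrix).prod := by
  rw [show ((((L.map tU).prod : GL (Fin 2) F)) : Matrix (Fin 2) (Fin 2) F)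
      = Units.coeHom _ ((L.map tU).prod) from rfl, map_list_prod, List.map_map]
  rfl

lemma sHom_val (s : Fˣ) : ((sHom s : GL (Fin 2) F) : Matrix (Fin 2) (Fin 2) F)
    = (s:F) • 1 := rfl

lemma smul_one_diag (s : F) : s • (1 : Matrix (Fin 2) (Fin 2) F) = Matrix.diagonal ![s,s] := by
  ext i j
  fin_cases i <;> fin_cases j <;> simp [Matrix.one_apply]

lemma exists_decomp (g : GL (Fin 2) F) :
    ∃ (Ll Lr : List (Matrix.TransvectionStruct (Fin 2) F)) (d0 d1 : Fˣ),
      g = (Ll.map tU).prod * (dHom (d0 * d1⁻¹) * sHom d1) * (Lr.map tU).prod := by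
  obtain ⟨Ll, Lr, D, hD⟩ :=
    Matrix.Pivot.exists_list_transvec_mul_diagonal_mul_list_transvec
      ((g : Matrix (Fin 2) (Fin 2) F))
  have hdet : (g : Matrix (Fin 2) (Fin 2) F).det = D 0 * D 1 := by
    rw [hD]
    simp [Fin.prod_univ_two]
  have h0 : D 0 ≠ 0 := fun h => det_ne g (by rw [hdet, h, zero_mul])
  have h1 : D 1 ≠ 0 := fun h => det_ne g (by rw [hdet, h, mul_zero])
  refine ⟨Ll, Lr, Units.mk0 (D 0) h0, Units.mk0 (D 1) h1, ?_⟩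
  apply Units.ext
  rw [Units.val_mul, Units.val_mul, tU_prod_val, tU_prod_val]
  have hmid : ((dHom (Units.mk0 (D 0) h0 * (Units.mk0 (D 1) h1)⁻¹) * sHom (Units.mk0 (D 1) h1)
      : GL (Fin 2) F) : Matrix (Fin 2) (Fin 2) F) = Matrix.diagonal D := by
    rw [Units.val_mul, dHom_val, sHom_val, smul_one_diag, diag2_mul]
    have hvec : ![((Units.mk0 (D 0) h0 * (Units.mk0 (D 1) h1)⁻¹ : Fˣ) : F) *
        ((Units.mk0 (D 1) h1 : Fˣ) : F), 1 * ((Units.mk0 (D 1) h1 : Fˣ) : F)] = D := by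
      funext i
      fin_cases i
      · simp only [Matrix.cons_val_zero]
        push_cast
        field_simp
        simp [h1]
      · simp only [Matrix.cons_val_one, Matrix.head_cons]
        rw [one_mul]
        rfl
    rw [hvec]
  rw [hmid, hD]

end Aux7

theorem det_perm_rep_GL2_mod_Borel (F : Type*) [Field F] [Fintype F] [DecidableEq F]
    (hodd : Odd (Fintype.card F))
    (B : Subgroup (GL (Fin 2) F))
    (hB : ∀ g : GL (Fin 2) F, g ∈ B ↔ (g : Matrix (Fin 2) (Fin 2) F) 1 0 = 0)
    [Fintype (GL (Fin 2) F ⧸ B)] [DecidableEq (GL (Fin 2) F ⧸ B)]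
    (g : GL (Fin 2) F) :
    Equiv.Perm.sign (MulAction.toPermHom (GL (Fin 2) F) (GL (Fin 2) F ⧸ B) g) =
      (if IsSquare (Matrix.GeneralLinearGroup.det g) then 1 else -1) := by
  obtain ⟨γ, hγ⟩ := IsCyclic.exists_generator (α := Fˣ)
  obtain ⟨Ll, Lr, d0, d1, hdecomp⟩ := exists_decomp g
  set c : Fˣ := d0 * d1⁻¹ with hc
  obtain ⟨k, hk⟩ := mem_powers_iff_mem_zpowers.2 (hγ c)
  set Φ : GL (Fin 2) F →* ℤˣ :=
    Equiv.Perm.sign.comp (MulAction.toPermHom (GL (Fin 2) F) (GL (Fin 2) F ⧸ B)) with hΦdef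
  have hΦT : ∀ t : Matrix.TransvectionStruct (Fin 2) F, Φ (tU t) = 1 := fun t =>
    int_units_eq_one (by rw [← map_pow, tU_pow_card, map_one]) hodd
  have hΦL : ∀ L : List (Matrix.TransvectionStruct (Fin 2) F), Φ ((L.map tU).prod) = 1 := by
    intro L
    rw [map_list_prod, List.map_map]
    apply List.prod_eq_one
    intro x hx
    obtain ⟨t, -, rfl⟩ := List.mem_map.1 hx
    exact hΦT t
  have hΦs : Φ (sHom d1) = 1 := by
    show Equiv.Perm.sign (MulAction.toPermHom (GL (Fin 2) F) (GL (Fin 2) F ⧸ B) (sHom d1)) = 1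
    rw [toPerm_sHom B hB, map_one]
  have hΦd : Φ (dHom c) = (-1)^k := by
    rw [← hk, map_pow, map_pow]
    congr 1
    show Equiv.Perm.sign (MulAction.toPermHom (GL (Fin 2) F) (GL (Fin 2) F ⧸ B) (dHom γ)) = -1
    exact sign_dHom_gen B hB hodd γ hγ
  have hΦg : Φ g = (-1)^k := by
    rw [hdecomp, map_mul, map_mul, map_mul, hΦL, hΦL, hΦs, hΦd, one_mul, mul_one, mul_one]
  have hdetg : Matrix.GeneralLinearGroup.det g = c * d1^2 := by
    rw [hdecomp, map_mul, map_mul, map_mul]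
    have hTd : ∀ L : List (Matrix.TransvectionStruct (Fin 2) F),
        Matrix.GeneralLinearGroup.det ((L.map tU).prod : GL (Fin 2) F) = 1 := by
      intro L
      rw [map_list_prod, List.map_map]
      apply List.prod_eq_one
      intro x hx
      obtain ⟨t, -, rfl⟩ := List.mem_map.1 hx
      show Matrix.GeneralLinearGroup.det (tU t) = 1
      apply Units.ext
      rw [Matrix.GeneralLinearGroup.val_det_apply]
      show Matrix.det t.toMatrix = 1
      simp
    have hd : Matrix.GeneralLinearGroup.det (dHom c : GL (Fin 2) F) = c := by
      apply Units.ext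
      rw [Matrix.GeneralLinearGroup.val_det_apply, dHom_val, Matrix.det_diagonal,
        Fin.prod_univ_two]
      simp
    have hs : Matrix.GeneralLinearGroup.det (sHom d1 : GL (Fin 2) F) = d1^2 := by
      apply Units.ext
      rw [Matrix.GeneralLinearGroup.val_det_apply, sHom_val, Matrix.det_smul, Matrix.det_one]
      push_cast
      simp
    rw [hTd, hTd, hd, hs, one_mul, mul_one]
  have hiff : IsSquare (Matrix.GeneralLinearGroup.det g) ↔ Even k := by
    rw [hdetg, isSquare_mul_sq_iff, ← hk, isSquare_gen_pow hodd γ hγ]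
  have hgoal : Equiv.Perm.sign (MulAction.toPermHom (GL (Fin 2) F) (GL (Fin 2) F ⧸ B) g)
      = Φ g := rfl
  rw [hgoal, hΦg]
  by_cases hk2 : Even k
  · rw [if_pos (hiff.2 hk2), hk2.neg_one_pow]
  · rw [if_neg (fun h => hk2 (hiff.1 h)), (Nat.not_even_iff_odd.1 hk2).neg_one_pow]
end
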